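/- Algebraic form of the statement that the interval is simplicial: let L be a distributive lattice and let i, j, x, y : L satisfy x ⊓ i ⊓ j = y ⊓ i ⊓ j and x ⊔ i ⊔ j = y ⊔ i ⊔ j. Then there exists a unique z : L such that z ⊓ j = x ⊓ j, z ⊔ i ⊔ j = x ⊔ i ⊔ j, z ⊓ i = y ⊓ i, and z ⊔ i ⊔ j = y ⊔ i ⊔ j. -/
import Mathlib


/-- **The interval is simplicial, algebraic form.** In a distributive
lattice, if `x ⊓ i ⊓ j = y ⊓ i ⊓ j` and `x ⊔ i ⊔ j = y ⊔ i ⊔ j`, then there is a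
unique `z` agreeing with `x` modulo `i ≤ j` and with `y` modulo `j ≤ i`. -/
theorem stmt8 {L : Type*} [DistribLattice L] (i j x y : L)
    (h₁ : x ⊓ i ⊓ j = y ⊓ i ⊓ j) (h₂ : x ⊔ i ⊔ j = y ⊔ i ⊔ j) :
    ∃! z : L,
      z ⊓ j = x ⊓ j ∧ z ⊔ i ⊔ j = x ⊔ i ⊔ j ∧
      z ⊓ i = y ⊓ i ∧ z ⊔ i ⊔ j = y ⊔ i ⊔ j := by
  set z : L := (x ⊓ j) ⊔ (y ⊓ i) ⊔ (x ⊓ y) with hz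
  have hzj : z ⊓ j = x ⊓ j := by
    apply le_antisymm
    · rw [hz, inf_sup_right, inf_sup_right]
      apply sup_le (sup_le ?_ ?_) ?_
      · exact inf_le_left
      · calc y ⊓ i ⊓ j = x ⊓ i ⊓ j := h₁.symm
          _ ≤ x ⊓ j := inf_le_inf_right j inf_le_left
      · exact inf_le_inf_right j inf_le_left
    · exact le_inf (le_sup_of_le_left le_sup_left) inf_le_right
  have hzi : z ⊓ i = y ⊓ i := by
    apply le_antisymm
    · rw [hz, inf_sup_right, inf_sup_right]
      apply sup_le (sup_le ?_ ?_) ?_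
      · calc x ⊓ j ⊓ i = x ⊓ i ⊓ j := by rw [inf_assoc, inf_comm j i, ← inf_assoc]
          _ = y ⊓ i ⊓ j := h₁
          _ ≤ y ⊓ i := inf_le_left
      · exact inf_le_left
      · exact inf_le_inf_right i inf_le_right
    · exact le_inf (le_sup_of_le_left le_sup_right) inf_le_right
  have hsup : z ⊔ i ⊔ j = x ⊔ i ⊔ j := by
    have h3 : (x ⊓ y) ⊔ (i ⊔ j) = x ⊔ i ⊔ j := by
      rw [sup_inf_right, ← sup_assoc, ← sup_assoc, h₂, inf_idem]
    calc z ⊔ i ⊔ j = (x ⊓ j) ⊔ ((y ⊓ i) ⊔ ((x ⊓ y) ⊔ (i ⊔ j))) := by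
          rw [hz]; ac_rfl
      _ = (x ⊓ j) ⊔ ((y ⊓ i) ⊔ (x ⊔ i ⊔ j)) := by rw [h3]
      _ = x ⊔ i ⊔ j := by
          rw [sup_eq_right.mpr (inf_le_right.trans (le_sup_of_le_left le_sup_right) :
                (y ⊓ i : L) ≤ x ⊔ i ⊔ j),
            sup_eq_right.mpr (inf_le_right.trans le_sup_right : (x ⊓ j : L) ≤ x ⊔ i ⊔ j)]
  refine ⟨z, ⟨hzj, hsup, hzi, hsup.trans h₂⟩, ?_⟩
  rintro w ⟨hwj, hwsup, hwi, -⟩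
  apply eq_of_inf_eq_sup_eq (a := i ⊔ j)
  · rw [inf_sup_left, inf_sup_left, hwj, hwi, hzj, hzi]
  · rw [sup_assoc] at hwsup hsup
    rw [hwsup, hsup]
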